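/- Let T be any 4×4 real symmetric matrix with T_{1,3} = T_{3,1} = T_{2,4} = T_{4,2} = 0, and let H' be the 4×4 real matrix with rows (0,0,−1,1), (0,−1,1,0), (−1,1,0,0), (1,0,0,−1). Then there is no polynomial h with real coefficients such that h(T) = H'. -/
import Mathlib


open Polynomial Matrix

lemma commute_aeval_aux {n : Type*} [Fintype n] [DecidableEq n]
    {M T : Matrix n n ℝ} (hMT : Commute M T) (p : ℝ[X]) :
    Commute M (Polynomial.aeval T p) := by
  induction p using Polynomial.induction_on' with
  | add p q hp hq => simpa [map_add] using hp.add_right hq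
  | monomial k a =>
      rw [Polynomial.aeval_monomial]
      exact (Algebra.commute_algebraMap_right a M).mul_right (hMT.pow_right k)

lemma fin4_mk2 (h : 2 < 4) : (⟨2, h⟩ : Fin 4) = 2 := rfl
lemma fin4_mk3 (h : 3 < 4) : (⟨3, h⟩ : Fin 4) = 3 := rfl
lemma fin4_mk1 (h : 1 < 4) : (⟨1, h⟩ : Fin 4) = 1 := rfl
lemma fin4_mk0 (h : 0 < 4) : (⟨0, h⟩ : Fin 4) = 0 := rfl

theorem stmt_17 (T : Matrix (Fin 4) (Fin 4) ℝ) (hsymm : T.IsSymm)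
    (h02 : T 0 2 = 0) (h20 : T 2 0 = 0) (h13 : T 1 3 = 0) (h31 : T 3 1 = 0) :
    let H' : Matrix (Fin 4) (Fin 4) ℝ :=
      !![0,0,-1,1; 0,-1,1,0; -1,1,0,0; 1,0,0,-1]
    ¬ ∃ h : ℝ[X], Polynomial.aeval T h = H' := by
  intro H' ⟨h, hh⟩
  -- H' commutes with T
  have hTH : T * H' = H' * T := by
    have := (commute_aeval_aux (Commute.refl T) h).eq
    rw [hh] at this
    exact this
  -- extract entry equations of the commutator
  have e01 := congrFun (congrFun hTH 0) 1 ; have e13 := congrFun (congrFun hTH 1) 3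
  have e23 := congrFun (congrFun hTH 2) 3 ; have e12 := congrFun (congrFun hTH 1) 2
  have e02 := congrFun (congrFun hTH 0) 2 ; have e03 := congrFun (congrFun hTH 0) 3
  simp [Matrix.mul_apply, Fin.sum_univ_four, H', Matrix.cons_val_zero, Matrix.cons_val_one,
    Matrix.cons_val_two, Matrix.cons_val_three, Matrix.head_cons, Matrix.tail_cons, Matrix.vecHead, Matrix.vecTail, Function.comp] at e01 e13 e23 e12 e02 e03
  have s10 := hsymm.apply 0 1 ; have s30 := hsymm.apply 0 3
  have s21 := hsymm.apply 1 2 ; have s32 := hsymm.apply 2 3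
  -- key structural equalities
  have k1 : T 0 1 = T 0 3 := by linarith
  have k2 : T 1 2 = T 2 3 := by linarith
  have k3 : T 1 1 = T 3 3 := by linarith
  have k4 : T 0 1 = T 1 2 := by linarith
  -- permutation matrix swapping 1 and 3
  set P : Matrix (Fin 4) (Fin 4) ℝ := !![1,0,0,0; 0,0,0,1; 0,0,1,0; 0,1,0,0] with hP
  have hPT : Commute P T := by
    show P * T = T * P
    ext i j
    fin_cases i <;> fin_cases j <;>
      norm_num [hP, Matrix.mul_apply, Fin.sum_univ_four, Matrix.cons_val_zero, Matrix.cons_val_one,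
        Matrix.cons_val_two, Matrix.cons_val_three, Matrix.head_cons, Matrix.tail_cons,
        Matrix.vecHead, Matrix.vecTail, Function.comp, fin4_mk0, fin4_mk1, fin4_mk2, fin4_mk3] <;> linarith
  have hPH' : P * H' = H' * P := by
    have := (commute_aeval_aux hPT h).eq
    rwa [hh] at this
  have := congrFun (congrFun hPH' 1) 0
  norm_num [hP, H', Matrix.mul_apply, Fin.sum_univ_four, Matrix.cons_val_zero, Matrix.cons_val_one,
    Matrix.cons_val_two, Matrix.cons_val_three, Matrix.head_cons, Matrix.tail_cons,
    Matrix.vecHead, Matrix.vecTail, Function.comp] at this
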